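/- Fix an integer n ≥ 3 and a nonempty subset A ⊂ {0, 1, …, n−1}, and let C_{n,A} = {Σ_{j=1}^∞ a_j/n^j : a_j ∈ A for all j} ⊂ ℝ. Let G_n denote the group of integers modulo n and fix a positive integer k. Suppose that {(a_0 − a_1, a_0 − a_2, …, a_0 − a_k) mod n : a_0, …, a_k ∈ A} = (G_n)^k. Then for every nonempty compact set E ⊂ ℝ, the lower Minkowski dimension satisfies dim_m(C_{n,A} + E) ≥ k/(k+1) + dim_m(E)/(k+1). -/

import Mathlib

open Filter Set Pointwise

/-- The minimal number of intervals of length `δ` needed to cover `A ⊆ ℝ`. -/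
noncomputable def coverNumber (A : Set ℝ) (δ : ℝ) : ℕ :=
  sInf {N : ℕ | ∃ C : Finset ℝ, C.card = N ∧ A ⊆ ⋃ x ∈ C, Set.Icc x (x + δ)}

/-- The lower Minkowski dimension of a set `A ⊆ ℝ`: the liminf as `δ → 0⁺` of
`log N(A, δ) / log (1/δ)`. -/
noncomputable def lowerMinkDim (A : Set ℝ) : ℝ :=
  liminf (fun δ : ℝ => Real.log (coverNumber A δ) / Real.log (1 / δ)) (nhdsWithin 0 (Set.Ioi 0))

/-- The Cantor-like set `C_{n,A} = {∑_{j≥1} aⱼ n^{-j} : aⱼ ∈ A}`. -/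
def digitCantor (n : ℕ) (A : Finset ℕ) : Set ℝ :=
  {x | ∃ a : ℕ → ℕ, (∀ j, a j ∈ A) ∧ x = ∑' j : ℕ, (a j : ℝ) / (n : ℝ) ^ (j + 1)}

lemma coverNumber_le_of_cover {X : Set ℝ} {δ : ℝ} {C : Finset ℝ}
    (h : X ⊆ ⋃ x ∈ C, Set.Icc x (x + δ)) : coverNumber X δ ≤ C.card :=
  Nat.sInf_le ⟨C, rfl, h⟩

lemma cover_Icc {x l δ : ℝ} (hδ : 0 < δ) :
    Set.Icc x (x + l) ⊆ ⋃ i ∈ Finset.range (⌈l / δ⌉₊ + 1), Set.Icc (x + i * δ) (x + i * δ + δ) := by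
  intro y hy
  obtain ⟨h1, h2⟩ := hy
  have h0 : 0 ≤ (y - x) / δ := div_nonneg (by linarith) hδ.le
  set i := ⌊(y - x) / δ⌋₊ with hi
  have hil : (i : ℝ) ≤ (y - x) / δ := Nat.floor_le h0
  have hiu : (y - x) / δ < i + 1 := Nat.lt_floor_add_one _
  have hq : (y - x) / δ ≤ l / δ := by gcongr; linarith
  refine Set.mem_iUnion₂.2 ⟨i, ?_, ?_, ?_⟩
  · simp only [Finset.mem_range, Nat.lt_succ_iff]
    exact le_trans (Nat.floor_le_floor hq) (Nat.floor_le_ceil _)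
  · have := (le_div_iff₀ hδ).mp hil
    linarith
  · have := (div_lt_iff₀ hδ).mp hiu
    linarith

/-- coverNumber of a subset of an interval is bounded. -/
lemma exists_cover_of_subset_Icc {X : Set ℝ} {a b δ : ℝ} (hδ : 0 < δ) (hX : X ⊆ Set.Icc a b) :
    ∃ C : Finset ℝ, C.card ≤ ⌈(b - a) / δ⌉₊ + 1 ∧ X ⊆ ⋃ x ∈ C, Set.Icc x (x + δ) := by
  refine ⟨(Finset.range (⌈(b - a) / δ⌉₊ + 1)).image (fun i : ℕ => a + i * δ), ?_, ?_⟩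
  · exact le_trans (Finset.card_image_le) (by simp)
  · intro y hy
    have : y ∈ Set.Icc a (a + (b - a)) := by
      have := hX hy; constructor <;> [exact this.1; linarith [this.2]]
    have := cover_Icc hδ this
    simp only [Set.mem_iUnion, Finset.mem_range, Finset.mem_image] at this ⊢
    obtain ⟨i, hi, h⟩ := this
    exact ⟨a + i * δ, ⟨⟨i, hi, rfl⟩, h⟩⟩

lemma coverSet_nonempty {X : Set ℝ} {a b δ : ℝ} (hδ : 0 < δ) (hX : X ⊆ Set.Icc a b) :
    {N : ℕ | ∃ C : Finset ℝ, C.card = N ∧ X ⊆ ⋃ x ∈ C, Set.Icc x (x + δ)}.Nonempty := by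
  obtain ⟨C, -, hC⟩ := exists_cover_of_subset_Icc hδ hX
  exact ⟨C.card, C, rfl, hC⟩

lemma coverNumber_spec {X : Set ℝ} {δ : ℝ}
    (h : {N : ℕ | ∃ C : Finset ℝ, C.card = N ∧ X ⊆ ⋃ x ∈ C, Set.Icc x (x + δ)}.Nonempty) :
    ∃ C : Finset ℝ, C.card = coverNumber X δ ∧ X ⊆ ⋃ x ∈ C, Set.Icc x (x + δ) :=
  Nat.sInf_mem h

lemma one_le_coverNumber {X : Set ℝ} {δ : ℝ} (hne : X.Nonempty)
    (h : {N : ℕ | ∃ C : Finset ℝ, C.card = N ∧ X ⊆ ⋃ x ∈ C, Set.Icc x (x + δ)}.Nonempty) :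
    1 ≤ coverNumber X δ := by
  obtain ⟨C, hcard, hcover⟩ := coverNumber_spec h
  obtain ⟨x, hx⟩ := hne
  have := hcover hx
  simp only [Set.mem_iUnion] at this
  obtain ⟨c, hc, -⟩ := this
  rw [← hcard]
  exact Finset.card_pos.2 ⟨c, hc⟩

lemma coverNumber_mono {X : Set ℝ} {δ δ' : ℝ} (hδ : δ ≤ δ')
    (h : {N : ℕ | ∃ C : Finset ℝ, C.card = N ∧ X ⊆ ⋃ x ∈ C, Set.Icc x (x + δ)}.Nonempty) :
    coverNumber X δ' ≤ coverNumber X δ := by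
  obtain ⟨C, hcard, hcover⟩ := coverNumber_spec h
  rw [← hcard]
  apply coverNumber_le_of_cover
  refine hcover.trans (Set.iUnion₂_mono fun x _ => Set.Icc_subset_Icc le_rfl (by linarith))

lemma coverNumber_subdiv {X : Set ℝ} {δ δ' : ℝ} (hδ' : 0 < δ') (hδ : δ' ≤ δ)
    (h : {N : ℕ | ∃ C : Finset ℝ, C.card = N ∧ X ⊆ ⋃ x ∈ C, Set.Icc x (x + δ)}.Nonempty) :
    coverNumber X δ' ≤ (⌈δ / δ'⌉₊ + 1) * coverNumber X δ := by
  obtain ⟨C, hcard, hcover⟩ := coverNumber_spec h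
  have hsub : X ⊆ ⋃ y ∈ (C ×ˢ Finset.range (⌈δ / δ'⌉₊ + 1)).image
      (fun q : ℝ × ℕ => q.1 + q.2 * δ'), Set.Icc y (y + δ') := by
    intro z hz
    have := hcover hz
    simp only [Set.mem_iUnion] at this
    obtain ⟨x, hx, hz2⟩ := this
    have := cover_Icc (l := δ) hδ' hz2
    simp only [Set.mem_iUnion, Finset.mem_range] at this
    obtain ⟨i, hi, h2⟩ := this
    simp only [Set.mem_iUnion, Finset.mem_image, Finset.mem_product, Finset.mem_range]
    exact ⟨x + i * δ', ⟨⟨(x, i), ⟨hx, hi⟩, rfl⟩, h2⟩⟩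
  calc coverNumber X δ' ≤ _ := coverNumber_le_of_cover hsub
    _ ≤ (C ×ˢ Finset.range (⌈δ / δ'⌉₊ + 1)).card := Finset.card_image_le
    _ = C.card * (⌈δ / δ'⌉₊ + 1) := by rw [Finset.card_product, Finset.card_range]
    _ = (⌈δ / δ'⌉₊ + 1) * coverNumber X δ := by rw [hcard, Nat.mul_comm]

lemma summable_digits {n : ℕ} (hn : 2 ≤ n) {d : ℕ → ℕ} (hd : ∀ j, d j ≤ n) :
    Summable (fun j : ℕ => (d j : ℝ) / (n : ℝ) ^ (j + 1)) := by
  have hn0 : (0:ℝ) < n := by exact_mod_cast Nat.lt_of_lt_of_le (by norm_num) hn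
  have hgeom : Summable (fun j : ℕ => (1 / (n:ℝ)) ^ j) := by
    apply summable_geometric_of_lt_one (by positivity)
    rw [div_lt_one hn0]; exact_mod_cast Nat.lt_of_lt_of_le (by norm_num) hn
  apply Summable.of_nonneg_of_le (fun j => by positivity) (fun j => ?_) hgeom
  have h1 : ((d j : ℝ)) / (n:ℝ) ^ (j+1) ≤ (n:ℝ) / (n:ℝ) ^ (j+1) := by
    gcongr; exact_mod_cast hd j
  refine h1.trans (le_of_eq ?_)
  rw [one_div, inv_pow, pow_succ]
  rw [eq_comm, inv_eq_iff_eq_inv, inv_div]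
  field_simp

lemma tsum_sub_digits {n : ℕ} (hn : 2 ≤ n) {d d' : ℕ → ℕ} (hd : ∀ j, d j ≤ n)
    (hd' : ∀ j, d' j ≤ n) {m : ℕ} (h : ∀ j, m ≤ j → d j = d' j) :
    (∑' j : ℕ, (d j : ℝ) / (n : ℝ) ^ (j + 1)) - (∑' j : ℕ, (d' j : ℝ) / (n : ℝ) ^ (j + 1))
      = ∑ j ∈ Finset.range m, ((d j : ℝ) - (d' j : ℝ)) / (n : ℝ) ^ (j + 1) := by
  rw [← Summable.tsum_sub (summable_digits hn hd) (summable_digits hn hd')]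
  have : ∀ j : ℕ, (d j : ℝ) / (n : ℝ) ^ (j + 1) - (d' j : ℝ) / (n : ℝ) ^ (j + 1)
      = ((d j : ℝ) - (d' j : ℝ)) / (n : ℝ) ^ (j + 1) := fun j => (sub_div _ _ _).symm
  simp only [this]
  apply tsum_eq_sum
  intro j hj
  rw [Finset.mem_range, not_lt] at hj
  rw [h j hj]
  ring

lemma digit_term_le {n : ℕ} (hn : 2 ≤ n) {d : ℕ → ℕ} (hd : ∀ j, d j ≤ n) (j : ℕ) :
    (d j : ℝ) / (n : ℝ) ^ (j + 1) ≤ (1 / (n:ℝ)) ^ j := by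
  have hn0 : (0:ℝ) < n := by exact_mod_cast Nat.lt_of_lt_of_le (by norm_num) hn
  have h1 : ((d j : ℝ)) / (n:ℝ) ^ (j+1) ≤ (n:ℝ) / (n:ℝ) ^ (j+1) := by
    gcongr; exact_mod_cast hd j
  refine h1.trans (le_of_eq ?_)
  rw [one_div, inv_pow, pow_succ]
  rw [eq_comm, inv_eq_iff_eq_inv, inv_div]
  field_simp

lemma hgeom {n : ℕ} (hn : 2 ≤ n) : Summable (fun j : ℕ => (1 / (n:ℝ)) ^ j) := by
  have hn0 : (0:ℝ) < n := by exact_mod_cast Nat.lt_of_lt_of_le (by norm_num) hn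
  apply summable_geometric_of_lt_one (by positivity)
  rw [div_lt_one hn0]; exact_mod_cast Nat.lt_of_lt_of_le (by norm_num) hn

lemma tsum_digits_mem_Icc {n : ℕ} (hn : 2 ≤ n) {d : ℕ → ℕ} (hd : ∀ j, d j ≤ n) :
    (∑' j : ℕ, (d j : ℝ) / (n : ℝ) ^ (j + 1)) ∈ Set.Icc (0:ℝ) 2 := by
  have hn0 : (0:ℝ) < n := by exact_mod_cast Nat.lt_of_lt_of_le (by norm_num) hn
  have hs : Summable (fun j : ℕ => (d j : ℝ) / (n : ℝ) ^ (j + 1)) := by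
    apply Summable.of_nonneg_of_le (fun j => by positivity) (digit_term_le hn hd) (hgeom hn)
  constructor
  · exact tsum_nonneg (fun j => by positivity)
  · have h2 : (∑' j : ℕ, (d j : ℝ) / (n : ℝ) ^ (j + 1)) ≤ ∑' j : ℕ, (1 / (n:ℝ)) ^ j :=
      Summable.tsum_le_tsum (digit_term_le hn hd) hs (hgeom hn)
    have h3 : (∑' j : ℕ, (1 / (n:ℝ)) ^ j) = (1 - 1/(n:ℝ))⁻¹ :=
      tsum_geometric_of_lt_one (by positivity) (by rw [div_lt_one hn0]; exact_mod_cast Nat.lt_of_lt_of_le (by norm_num) hn)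
    have h4 : (1 - 1/(n:ℝ))⁻¹ ≤ 2 := by
      have hhalf : (1:ℝ)/2 ≤ 1 - 1/(n:ℝ) := by
        have : 1/(n:ℝ) ≤ 1/2 := by
          apply div_le_div_of_nonneg_left (by norm_num) (by norm_num)
          exact_mod_cast hn
        linarith
      calc (1 - 1/(n:ℝ))⁻¹ ≤ ((1:ℝ)/2)⁻¹ := by
            apply inv_anti₀ (by norm_num) hhalf
        _ = 2 := by norm_num
    linarith [h2, h3 ▸ h2]

lemma G_inj {n k : ℕ} [NeZero n] (F : Fin k → (Fin k → ZMod n) → ℤ)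
    (hF : ∀ i v, ((F i v : ZMod n)) = v i) :
    ∀ m (t t' : Fin m → (Fin k → ZMod n)),
      (∀ i, ∑ j, F i (t j) * (n:ℤ) ^ (j:ℕ) = ∑ j, F i (t' j) * (n:ℤ) ^ (j:ℕ)) → t = t' := by
  intro m
  induction m with
  | zero => intro t t' _; ext j; exact absurd j.2 (by omega)
  | succ m ih =>
    intro t t' h
    have h0 : t 0 = t' 0 := by
      funext i
      have hc := congrArg (Int.cast : ℤ → ZMod n) (h i)
      push_cast at hc
      rw [Fin.sum_univ_succ, Fin.sum_univ_succ] at hc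
      simp only [ZMod.natCast_self, Fin.val_zero, pow_zero, mul_one, Fin.val_succ,
        zero_pow (Nat.succ_ne_zero _), mul_zero, Finset.sum_const_zero, add_zero] at hc
      rw [← hF i (t 0), ← hF i (t' 0)]
      exact_mod_cast hc
    have htail : (fun j => t (Fin.succ j)) = (fun j => t' (Fin.succ j)) := by
      apply ih
      intro i
      have hi := h i
      rw [Fin.sum_univ_succ, Fin.sum_univ_succ, h0] at hi
      have hi2 : ∑ j : Fin m, F i (t j.succ) * (n:ℤ) ^ ((j.succ : Fin (m+1)) : ℕ)
          = ∑ j : Fin m, F i (t' j.succ) * (n:ℤ) ^ ((j.succ : Fin (m+1)) : ℕ) := by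
        exact add_left_cancel hi
      have hfac : ∀ (s : Fin m → Fin k → ZMod n),
          ∑ j : Fin m, F i (s j) * (n:ℤ) ^ ((j.succ : Fin (m+1)) : ℕ)
          = (n:ℤ) * ∑ j : Fin m, F i (s j) * (n:ℤ) ^ (j : ℕ) := by
        intro s
        rw [Finset.mul_sum]
        congr 1; funext j
        simp only [Fin.val_succ, pow_succ]
        ring
      rw [hfac, hfac] at hi2
      have hn0 : (n:ℤ) ≠ 0 := by exact_mod_cast (NeZero.ne n)
      exact mul_left_cancel₀ hn0 hi2
    funext j
    induction j using Fin.cases with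
    | zero => rw [h0]
    | succ j => exact congrFun htail j

/-- There is a maximal 2δ-separated finite subset of E, and it 5δ-covers E. -/
lemma exists_separated {E : Set ℝ} {δ : ℝ} (hδ : 0 < δ)
    (h : {N : ℕ | ∃ C : Finset ℝ, C.card = N ∧ E ⊆ ⋃ x ∈ C, Set.Icc x (x + δ)}.Nonempty) :
    ∃ S : Finset ℝ, ↑S ⊆ E ∧ (∀ x ∈ S, ∀ y ∈ S, x ≠ y → 2 * δ ≤ |x - y|) ∧
      coverNumber E δ ≤ 5 * S.card := by
  obtain ⟨CE, hCEcard, hCEcover⟩ := coverNumber_spec h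
  set Q : Set ℕ := {c : ℕ | ∃ S : Finset ℝ, ↑S ⊆ E ∧
      (∀ x ∈ S, ∀ y ∈ S, x ≠ y → 2 * δ ≤ |x - y|) ∧ S.card = c} with hQ
  have hQne : Q.Nonempty := ⟨0, ∅, by simp, by simp, by simp⟩
  have hQbdd : BddAbove Q := by
    refine ⟨CE.card, fun c hc => ?_⟩
    obtain ⟨S, hSE, hsep, rfl⟩ := hc
    have hpick : ∀ s ∈ S, ∃ c ∈ CE, s ∈ Set.Icc c (c + δ) := by
      intro s hs
      have := hCEcover (hSE hs)
      rw [Set.mem_iUnion₂] at this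
      obtain ⟨c, hc, hmem⟩ := this
      exact ⟨c, hc, hmem⟩
    choose f hf1 hf2 using hpick
    apply Finset.card_le_card_of_injOn (fun s => if h : s ∈ S then f s h else 0)
    · intro s hs; simp only [Finset.mem_coe] at hs ⊢; rw [dif_pos hs]; exact hf1 s hs
    · intro s hs s' hs' hss'
      simp only [Finset.mem_coe] at hs hs'
      simp only [dif_pos hs, dif_pos hs'] at hss'
      by_contra hne
      have h1 := hf2 s hs
      have h2 := hf2 s' hs'
      rw [hss'] at h1
      have : |s - s'| ≤ δ := by
        rw [abs_sub_le_iff]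
        constructor <;> [linarith [h1.1, h1.2, h2.1, h2.2]; linarith [h1.1, h1.2, h2.1, h2.2]]
      have := hsep s hs s' hs' hne
      linarith [abs_nonneg (s - s')]
  obtain ⟨S, hSE, hsep, hScard⟩ := Nat.sSup_mem hQne hQbdd
  refine ⟨S, hSE, hsep, ?_⟩
  -- maximality: every e ∈ E is within 2δ of some s ∈ S
  have hmax : ∀ e ∈ E, ∃ s ∈ S, |e - s| < 2 * δ := by
    intro e he
    by_contra hcon
    push_neg at hcon
    have heS : e ∉ S := by
      intro heS
      have := hcon e heS
      simp only [sub_self, abs_zero] at this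
      linarith
    have : (insert e S).card ∈ Q := by
      refine ⟨insert e S, ?_, ?_, rfl⟩
      · intro x hx
        simp only [Finset.coe_insert, Set.mem_insert_iff] at hx
        rcases hx with rfl | hx
        · exact he
        · exact hSE hx
      · intro x hx y hy hxy
        simp only [Finset.mem_insert] at hx hy
        rcases hx with rfl | hx <;> rcases hy with rfl | hy
        · exact absurd rfl hxy
        · exact hcon y hy
        · rw [abs_sub_comm]; exact hcon x hx
        · exact hsep x hx y hy hxy
    have hle := le_csSup hQbdd this
    rw [Finset.card_insert_of_notMem heS, hScard] at hle
    omega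
  -- cover E by 5 * S.card intervals
  have hcover : E ⊆ ⋃ y ∈ (S ×ˢ Finset.range 5).image
      (fun q : ℝ × ℕ => q.1 - 2 * δ + q.2 * δ), Set.Icc y (y + δ) := by
    intro e he
    obtain ⟨s, hs, hes⟩ := hmax e he
    have : e ∈ Set.Icc (s - 2 * δ) ((s - 2 * δ) + 4 * δ) := by
      rw [abs_sub_lt_iff] at hes
      constructor <;> [linarith [hes.1, hes.2]; linarith [hes.1, hes.2]]
    have h4 : (⌈(4 * δ) / δ⌉₊ + 1) = 5 := by
      rw [mul_div_assoc, div_self (ne_of_gt hδ), mul_one]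
      norm_num
    have := cover_Icc (x := s - 2*δ) (l := 4*δ) hδ this
    rw [h4] at this
    simp only [Set.mem_iUnion, Finset.mem_range] at this
    obtain ⟨i, hi, hmem⟩ := this
    simp only [Set.mem_iUnion, Finset.mem_image, Finset.mem_product, Finset.mem_range]
    exact ⟨s - 2*δ + i * δ, ⟨⟨(s, i), ⟨hs, hi⟩, rfl⟩, hmem⟩⟩
  calc coverNumber E δ ≤ _ := coverNumber_le_of_cover hcover
    _ ≤ (S ×ˢ Finset.range 5).card := Finset.card_image_le
    _ = 5 * S.card := by rw [Finset.card_product, Finset.card_range, Nat.mul_comm]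

lemma core_count (n : ℕ) (hn : 3 ≤ n) (A : Finset ℕ) (hA : A.Nonempty)
    (hAn : A ⊆ Finset.range n) (k : ℕ)
    (hdiff : {v : Fin k → ZMod n | ∃ a₀ ∈ A, ∃ a : Fin k → ℕ,
        (∀ i, a i ∈ A) ∧ v = fun i => ((a₀ : ZMod n) - (a i : ZMod n))} = Set.univ)
    (E : Set ℝ) (hEne : E.Nonempty) (hEc : IsCompact E) (m : ℕ) :
    coverNumber E ((n:ℝ)^m)⁻¹ * n^(k*m) ≤ 5^(k+1) *
      (coverNumber (digitCantor n A + E) ((n:ℝ)^m)⁻¹)^(k+1) := by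
  haveI : NeZero n := ⟨by omega⟩
  have hn2 : 2 ≤ n := by omega
  have hnR : (1:ℝ) < n := by exact_mod_cast (by omega : 1 < n)
  set δ : ℝ := ((n:ℝ)^m)⁻¹ with hδdef
  have hδ : 0 < δ := by positivity
  have hδn : (n:ℝ)^m * δ = 1 := by rw [hδdef, mul_inv_cancel₀ (by positivity)]
  -- choice functions from hdiff
  have hchoice : ∀ v : Fin k → ZMod n, ∃ a₀ ∈ A, ∃ a : Fin k → ℕ,
      (∀ i, a i ∈ A) ∧ v = fun i => ((a₀ : ZMod n) - (a i : ZMod n)) := by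
    intro v
    have : v ∈ {v : Fin k → ZMod n | ∃ a₀ ∈ A, ∃ a : Fin k → ℕ,
        (∀ i, a i ∈ A) ∧ v = fun i => ((a₀ : ZMod n) - (a i : ZMod n))} := by
      rw [hdiff]; trivial
    exact this
  choose g₀ hg₀A gg hggA hgeq using hchoice
  obtain ⟨astar, hastar⟩ := hA
  have hAlt : ∀ a ∈ A, a ≤ n := fun a ha => le_of_lt (Finset.mem_range.mp (hAn ha))
  -- digit functions
  set g : Fin (k+1) → (Fin k → ZMod n) → ℕ :=
    fun i => Fin.cases (motive := fun _ => (Fin k → ZMod n) → ℕ) g₀ (fun i' v => gg v i') i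
    with hg_def
  have hg0 : g 0 = g₀ := rfl
  have hgs : ∀ i : Fin k, g i.succ = fun v => gg v i := fun i => rfl
  have hgA : ∀ i v, g i v ∈ A := by
    intro i v
    induction i using Fin.cases with
    | zero => rw [hg0]; exact hg₀A v
    | succ i => rw [hgs]; exact hggA v i
  set d : Fin (k+1) → (Fin m → (Fin k → ZMod n)) → ℕ → ℕ :=
    fun i t j => if h : j < m then g i (t ⟨j, h⟩) else astar
    with hd_def
  have hdA : ∀ i t j, d i t j ∈ A := by
    intro i t j
    simp only [hd_def]
    split
    · exact hgA _ _
    · exact hastar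
  have hdn : ∀ i t j, d i t j ≤ n := fun i t j => hAlt _ (hdA i t j)
  have hdtail : ∀ i t t' j, m ≤ j → d i t j = d i t' j := by
    intro i t t' j hj
    simp only [hd_def, dif_neg (by omega : ¬ j < m)]
  -- the Cantor points
  set x : Fin (k+1) → (Fin m → (Fin k → ZMod n)) → ℝ :=
    fun i t => ∑' j : ℕ, (d i t j : ℝ) / (n : ℝ) ^ (j + 1) with hx_def
  have hxC : ∀ i t, x i t ∈ digitCantor n A := fun i t => ⟨d i t, hdA i t, rfl⟩
  -- the integer linear forms
  set F : Fin k → (Fin k → ZMod n) → ℤ := fun i v => (g₀ v : ℤ) - (gg v i : ℤ) with hF_def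
  have hF : ∀ i (v : (Fin k → ZMod n)), ((F i v : ZMod n)) = v i := by
    intro i v
    have := congrFun (hgeq v) i
    simp only [hF_def]
    push_cast
    rw [← this]
  set Gq : Fin k → (Fin m → (Fin k → ZMod n)) → ℤ :=
    fun i t => ∑ j : Fin m, F i (t (Fin.rev j)) * (n:ℤ) ^ (j:ℕ) with hGq_def
  -- Gq determines t
  have hGq_inj : ∀ t t' : Fin m → (Fin k → ZMod n), (∀ i, Gq i t = Gq i t') → t = t' := by
    intro t t' h
    have := G_inj F hF m (fun j => t (Fin.rev j)) (fun j => t' (Fin.rev j)) h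
    funext j
    have h2 := congrFun this (Fin.rev j)
    simpa [Fin.rev_rev] using h2
  -- key real identity
  have hGq_real : ∀ (i : Fin k) (t : Fin m → (Fin k → ZMod n)),
      ((Gq i t : ℤ) : ℝ) = (n:ℝ)^m * (x 0 t - x i.succ t) := by
    intro i t
    set w : ℕ → ℝ := fun j => if h : j < m then
        ((F i (t ⟨m-1-j, by omega⟩) : ℤ) : ℝ) * (n:ℝ)^j else 0 with hw_def
    have hA' : ((Gq i t : ℤ) : ℝ) = ∑ j ∈ Finset.range m, w j := by
      rw [hGq_def]
      push_cast
      rw [← Fin.sum_univ_eq_sum_range w m]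
      apply Finset.sum_congr rfl
      intro j _
      have hjm : (j:ℕ) < m := j.2
      have hrev : Fin.rev j = (⟨m-1-(j:ℕ), by omega⟩ : Fin m) := by
        ext
        simp [Fin.val_rev]
        omega
      simp only [hw_def, dif_pos hjm, hrev]
    have h1 : x 0 t - x i.succ t
        = ∑ j ∈ Finset.range m, ((d 0 t j : ℝ) - (d i.succ t j : ℝ)) / (n:ℝ)^(j+1) :=
      tsum_sub_digits hn2 (hdn 0 t) (hdn i.succ t)
        (fun j hj => by simp only [hd_def, dif_neg (by omega : ¬ j < m)])
    have hB' : (n:ℝ)^m * (x 0 t - x i.succ t) = ∑ j ∈ Finset.range m, w (m - 1 - j) := by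
      rw [h1, Finset.mul_sum]
      apply Finset.sum_congr rfl
      intro j hj
      rw [Finset.mem_range] at hj
      have hw : w (m-1-j) = ((F i (t ⟨j, hj⟩) : ℤ) : ℝ) * (n:ℝ)^(m-1-j) := by
        have hlt : m-1-j < m := by omega
        simp only [hw_def, dif_pos hlt]
        have : (⟨m-1-(m-1-j), by omega⟩ : Fin m) = (⟨j, hj⟩ : Fin m) := by
          ext; simp; omega
        rw [this]
      rw [hw]
      have hd0 : d 0 t j = g₀ (t ⟨j, hj⟩) := by
        simp only [hd_def, dif_pos hj, hg0]
      have hdi : d i.succ t j = gg (t ⟨j, hj⟩) i := by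
        simp only [hd_def, dif_pos hj, hgs]
      rw [hd0, hdi, hF_def]
      have hpow : (n:ℝ)^m = (n:ℝ)^(m-1-j) * (n:ℝ)^(j+1) := by
        rw [← pow_add]; congr 1; omega
      have hne : ((n:ℝ))^(j+1) ≠ 0 := by positivity
      push_cast
      field_simp [hpow]
      rw [hpow]; ring
    rw [hA', hB', Finset.sum_range_reflect]
  -- bounds on E and cover of C+E
  obtain ⟨a, ha⟩ := hEc.bddBelow
  obtain ⟨b, hb⟩ := hEc.bddAbove
  have hCE_sub : digitCantor n A + E ⊆ Set.Icc a (b + 2) := by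
    rintro z hz
    rw [Set.mem_add] at hz
    obtain ⟨c, hc, e, he, rfl⟩ := hz
    obtain ⟨dd, hddA, rfl⟩ := hc
    have h2 := tsum_digits_mem_Icc hn2 (fun j => hAlt _ (hddA j))
    have hae : a ≤ e := ha he
    have heb : e ≤ b := hb he
    constructor
    · linarith [h2.1]
    · linarith [h2.2]
  have hCEne := coverSet_nonempty hδ hCE_sub
  obtain ⟨C0, hC0card, hC0cover⟩ := coverNumber_spec hCEne
  have hEsub : E ⊆ Set.Icc a b := fun e he => ⟨ha he, hb he⟩
  have hEsetne := coverSet_nonempty hδ hEsub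
  obtain ⟨S, hSE, hsep, hScover⟩ := exists_separated hδ hEsetne
  -- interval choice
  have hIex : ∀ y, y ∈ digitCantor n A + E → ∃ c, c ∈ C0 ∧ y ∈ Set.Icc c (c + δ) := by
    intro y hy
    have := hC0cover hy
    rw [Set.mem_iUnion₂] at this
    obtain ⟨c, hc1, hc2⟩ := this
    exact ⟨c, hc1, hc2⟩
  choose! I hI1 hI2 using hIex
  set Φ : ℝ × (Fin m → (Fin k → ZMod n)) → (Fin (k+1) → ℝ) :=
    fun p i => I (x i p.2 + p.1) with hΦ_def
  have hmem : ∀ (s : ℝ), s ∈ E → ∀ (t : Fin m → (Fin k → ZMod n)) (i : Fin (k+1)),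
      (x i t + s) ∈ digitCantor n A + E := by
    intro s hs t i
    rw [Set.mem_add]
    exact ⟨x i t, hxC i t, s, hs, rfl⟩
  have hMapsTo : ∀ p ∈ S ×ˢ (Finset.univ : Finset (Fin m → (Fin k → ZMod n))),
      Φ p ∈ Fintype.piFinset (fun _ : Fin (k+1) => C0) := by
    intro p hp
    rw [Finset.mem_product] at hp
    rw [Fintype.mem_piFinset]
    intro i
    exact hI1 _ (hmem p.1 (hSE hp.1) p.2 i)
  have hfiber : ∀ y ∈ Fintype.piFinset (fun _ : Fin (k+1) => C0),
      ((S ×ˢ (Finset.univ : Finset (Fin m → (Fin k → ZMod n)))).filter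
        (fun p => Φ p = y)).card ≤ 5^k := by
    intro y hy
    set Fib := (S ×ˢ (Finset.univ : Finset (Fin m → (Fin k → ZMod n)))).filter
        (fun p => Φ p = y) with hFib
    rcases Finset.eq_empty_or_nonempty Fib with hFe | ⟨p₀, hp₀⟩
    · rw [hFe]; simp
    · have hfact : ∀ p ∈ Fib, p.1 ∈ S ∧
          ∀ i : Fin (k+1), (x i p.2 + p.1) ∈ Set.Icc (y i) (y i + δ) := by
        intro p hp
        rw [hFib, Finset.mem_filter, Finset.mem_product] at hp
        obtain ⟨⟨hp1, -⟩, hpy⟩ := hp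
        refine ⟨hp1, fun i => ?_⟩
        have h2 := hI2 _ (hmem p.1 (hSE hp1) p.2 i)
        rw [← hpy]
        exact h2
      have hdist : ∀ p ∈ Fib, ∀ q ∈ Fib, ∀ i : Fin (k+1),
          |(x i p.2 + p.1) - (x i q.2 + q.1)| ≤ δ := by
        intro p hp q hq i
        have h1 := (hfact p hp).2 i
        have h2 := (hfact q hq).2 i
        rw [abs_sub_le_iff]
        constructor
        · linarith [h1.1, h1.2, h2.1, h2.2]
        · linarith [h1.1, h1.2, h2.1, h2.2]
      have hkey : ∀ p ∈ Fib, ∀ i : Fin k,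
          Gq i p.2 - Gq i p₀.2 ∈ Finset.Icc (-2 : ℤ) 2 := by
        intro p hp i
        have h0 := hdist p hp p₀ hp₀ 0
        have hi := hdist p hp p₀ hp₀ i.succ
        have hreal : |((Gq i p.2 : ℤ) : ℝ) - ((Gq i p₀.2 : ℤ) : ℝ)| ≤ 2 := by
          rw [hGq_real i p.2, hGq_real i p₀.2]
          have hnm : (0:ℝ) < (n:ℝ)^m := by positivity
          rw [← mul_sub, abs_mul, abs_of_pos hnm]
          have heq : (x 0 p.2 - x i.succ p.2) - (x 0 p₀.2 - x i.succ p₀.2)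
              = ((x 0 p.2 + p.1) - (x 0 p₀.2 + p₀.1))
                - ((x i.succ p.2 + p.1) - (x i.succ p₀.2 + p₀.1)) := by ring
          have habs : |(x 0 p.2 - x i.succ p.2) - (x 0 p₀.2 - x i.succ p₀.2)| ≤ 2*δ := by
            rw [heq]
            calc |((x 0 p.2 + p.1) - (x 0 p₀.2 + p₀.1))
                - ((x i.succ p.2 + p.1) - (x i.succ p₀.2 + p₀.1))|
                ≤ |(x 0 p.2 + p.1) - (x 0 p₀.2 + p₀.1)|
                  + |(x i.succ p.2 + p.1) - (x i.succ p₀.2 + p₀.1)| := abs_sub _ _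
              _ ≤ 2*δ := by linarith [h0, hi]
          calc (n:ℝ)^m * |(x 0 p.2 - x i.succ p.2) - (x 0 p₀.2 - x i.succ p₀.2)|
              ≤ (n:ℝ)^m * (2*δ) := by
                exact mul_le_mul_of_nonneg_left habs (le_of_lt hnm)
            _ = 2 := by rw [show (n:ℝ)^m * (2*δ) = 2 * ((n:ℝ)^m * δ) by ring, hδn, mul_one]
        have hint : |Gq i p.2 - Gq i p₀.2| ≤ 2 := by
          have : |((Gq i p.2 - Gq i p₀.2 : ℤ) : ℝ)| ≤ 2 := by push_cast; exact hreal
          exact_mod_cast (by rwa [← Int.cast_abs, show ((2:ℝ)) = ((2:ℤ):ℝ) by norm_num,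
            Int.cast_le] at this)
        rw [Finset.mem_Icc]
        have := abs_le.mp hint
        omega
      calc Fib.card ≤ (Fintype.piFinset (fun _ : Fin k => Finset.Icc (-2 : ℤ) 2)).card := by
            apply Finset.card_le_card_of_injOn
              (fun p => fun i : Fin k => Gq i p.2 - Gq i p₀.2)
            · intro p hp
              rw [Finset.mem_coe, Fintype.mem_piFinset]
              exact hkey p hp
            · intro p hp q hq hpq
              simp only [Finset.mem_coe] at hp hq
              have ht : p.2 = q.2 := by
                apply hGq_inj
                intro i
                have := congrFun hpq i
                dsimp at this
                omega
              have hs : p.1 = q.1 := by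
                by_contra hne
                have hsepa := hsep p.1 (hfact p hp).1 q.1 (hfact q hq).1 hne
                have hd := hdist p hp q hq 0
                rw [ht] at hd
                have : |p.1 - q.1| ≤ δ := by
                  have heq2 : (x 0 q.2 + p.1) - (x 0 q.2 + q.1) = p.1 - q.1 := by ring
                  rwa [heq2] at hd
                linarith
              exact Prod.ext hs ht
        _ = 5^k := by
            rw [Fintype.card_piFinset_const]
            congr 1
  have hcount := Finset.card_le_mul_card_image_of_maps_to hMapsTo (5^k) hfiber
  rw [Finset.card_product, Finset.card_univ] at hcount
  have hcardfun : Fintype.card (Fin m → (Fin k → ZMod n)) = n^(k*m) := by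
    rw [Fintype.card_fun, Fintype.card_fun, ZMod.card, Fintype.card_fin, Fintype.card_fin,
      ← pow_mul, Nat.mul_comm]
  rw [hcardfun] at hcount
  rw [Fintype.card_piFinset_const, hC0card] at hcount
  calc coverNumber E δ * n^(k*m) ≤ (5 * S.card) * n^(k*m) := by
        apply Nat.mul_le_mul_right
        exact hScover
    _ = 5 * (S.card * n^(k*m)) := by ring
    _ ≤ 5 * (5^k * (coverNumber (digitCantor n A + E) δ)^(k+1)) := by
        apply Nat.mul_le_mul_left
        exact hcount
    _ = 5^(k+1) * (coverNumber (digitCantor n A + E) δ)^(k+1) := by ring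

set_option maxHeartbeats 2000000 in
theorem stmt11 (n : ℕ) (hn : 3 ≤ n) (A : Finset ℕ) (hA : A.Nonempty)
    (hAn : A ⊆ Finset.range n) (k : ℕ) (hk : 1 ≤ k)
    (hdiff : {v : Fin k → ZMod n | ∃ a₀ ∈ A, ∃ a : Fin k → ℕ,
        (∀ i, a i ∈ A) ∧ v = fun i => ((a₀ : ZMod n) - (a i : ZMod n))} = Set.univ)
    (E : Set ℝ) (hEne : E.Nonempty) (hEc : IsCompact E) :
    (k : ℝ) / (k + 1) + lowerMinkDim E / (k + 1) ≤ lowerMinkDim (digitCantor n A + E) := by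
  have hn2 : 2 ≤ n := by omega
  have hnR1 : (1:ℝ) < n := by exact_mod_cast (by omega : 1 < n)
  have hnR0 : (0:ℝ) < n := by linarith
  obtain ⟨a, ha⟩ := hEc.bddBelow
  obtain ⟨b, hb⟩ := hEc.bddAbove
  have hEsub : E ⊆ Set.Icc a b := fun e he => ⟨ha he, hb he⟩
  have hab : a ≤ b := by obtain ⟨e, he⟩ := hEne; exact le_trans (ha he) (hb he)
  have hAlt : ∀ c ∈ A, c ≤ n := fun c hc => le_of_lt (Finset.mem_range.mp (hAn hc))
  have hCE_sub : digitCantor n A + E ⊆ Set.Icc a (b + 2) := by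
    rintro z hz
    rw [Set.mem_add] at hz
    obtain ⟨c, hc, e, he, rfl⟩ := hz
    obtain ⟨dd, hddA, rfl⟩ := hc
    have h2 := tsum_digits_mem_Icc hn2 (fun j => hAlt _ (hddA j))
    have hae : a ≤ e := ha he
    have heb : e ≤ b := hb he
    constructor
    · linarith [h2.1]
    · linarith [h2.2]
  have hCEne : (digitCantor n A + E).Nonempty := by
    obtain ⟨e, he⟩ := hEne
    refine ⟨(∑' j : ℕ, ((fun _ => hA.choose) j : ℝ) / (n : ℝ) ^ (j + 1)) + e, ?_⟩
    rw [Set.mem_add]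
    exact ⟨_, ⟨fun _ => hA.choose, fun _ => hA.choose_spec, rfl⟩, e, he, rfl⟩
  -- notation
  set u : ℝ → ℝ := fun δ => Real.log (coverNumber E δ) / Real.log (1 / δ) with hu_def
  set v : ℝ → ℝ := fun δ =>
    Real.log (coverNumber (digitCantor n A + E) δ) / Real.log (1 / δ) with hv_def
  set l : Filter ℝ := nhdsWithin 0 (Set.Ioi 0) with hl_def
  haveI : l.NeBot := by rw [hl_def]; exact nhdsGT_neBot 0
  -- pointwise inequality
  have hpoint : ∀ δ : ℝ, 0 < δ → δ < 1/2 →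
      Real.log (coverNumber E δ) + k * Real.log (1/δ)
        ≤ (k+1) * Real.log (15*n) + (k+1) * Real.log (coverNumber (digitCantor n A + E) δ) := by
    intro δ hδ0 hδh
    set m := Nat.clog n ⌈1/δ⌉₊ with hm_def
    have hceil3 : 3 ≤ ⌈1/δ⌉₊ := by
      have h2 : (2:ℝ) < 1/δ := by rw [lt_div_iff₀ hδ0]; linarith
      have := Nat.lt_ceil.mpr (by exact_mod_cast h2 : ((2:ℕ):ℝ) < 1/δ)
      omega
    have hclog := Nat.le_pow_clog (show 1 < n by omega) ⌈1/δ⌉₊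
    rw [← hm_def] at hclog
    have hpowm : (1:ℝ)/δ ≤ (n:ℝ)^m := by
      calc (1:ℝ)/δ ≤ (⌈1/δ⌉₊ : ℝ) := Nat.le_ceil _
        _ ≤ ((n^m : ℕ) : ℝ) := by exact_mod_cast hclog
        _ = (n:ℝ)^m := by push_cast; ring
    have hinvm : ((n:ℝ)^m)⁻¹ ≤ δ := by
      rw [inv_le_comm₀ (by positivity) hδ0]
      rwa [one_div] at hpowm
    have hinvpos : 0 < ((n:ℝ)^m)⁻¹ := by positivity
    have hm1 : 1 ≤ m := by
      by_contra hm0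
      have hm00 : m = 0 := by omega
      rw [hm00, pow_zero] at hclog
      omega
    have hnm_ub : (n:ℝ)^m ≤ 2*n/δ := by
      have hpred := Nat.pow_pred_clog_lt_self (show 1 < n by omega)
        (show 1 < ⌈1/δ⌉₊ by omega)
      rw [← hm_def] at hpred
      have hnat : n^m ≤ n * ⌈1/δ⌉₊ := by
        have : n^m = n^(m-1) * n := by
          rw [← pow_succ]
          congr 1
          omega
        rw [this]
        have h1 : n^(m-1) ≤ ⌈1/δ⌉₊ := le_of_lt hpred
        calc n^(m-1) * n ≤ ⌈1/δ⌉₊ * n := Nat.mul_le_mul_right _ h1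
          _ = n * ⌈1/δ⌉₊ := Nat.mul_comm _ _
      have hceil_lt : (⌈1/δ⌉₊ : ℝ) < 1/δ + 1 := Nat.ceil_lt_add_one (by positivity)
      have h1δ : (1:ℝ) ≤ 1/δ := by
        rw [le_div_iff₀ hδ0]; linarith
      calc (n:ℝ)^m ≤ ((n * ⌈1/δ⌉₊ : ℕ) : ℝ) := by exact_mod_cast hnat
        _ = (n:ℝ) * (⌈1/δ⌉₊ : ℝ) := by push_cast; ring
        _ ≤ (n:ℝ) * (1/δ + 1) := by
            apply mul_le_mul_of_nonneg_left (le_of_lt hceil_lt) (le_of_lt hnR0)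
        _ ≤ (n:ℝ) * (2/δ) := by
            apply mul_le_mul_of_nonneg_left ?_ (le_of_lt hnR0)
            rw [div_add' _ _ _ (ne_of_gt hδ0), div_le_div_iff_of_pos_right hδ0]
            linarith
        _ = 2*n/δ := by ring
    -- natural number chain
    have c1 : coverNumber E δ ≤ coverNumber E ((n:ℝ)^m)⁻¹ :=
      coverNumber_mono hinvm (coverSet_nonempty hinvpos hEsub)
    have c2 := core_count n hn A hA hAn k hdiff E hEne hEc m
    have c3 : coverNumber (digitCantor n A + E) ((n:ℝ)^m)⁻¹
        ≤ (3*n) * coverNumber (digitCantor n A + E) δ := by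
      have hfac : ⌈δ/((n:ℝ)^m)⁻¹⌉₊ + 1 ≤ 3*n := by
        have hdiv : δ/((n:ℝ)^m)⁻¹ ≤ ((2*n : ℕ) : ℝ) := by
          rw [div_eq_mul_inv, inv_inv]
          calc δ * (n:ℝ)^m ≤ δ * (2*n/δ) :=
                mul_le_mul_of_nonneg_left hnm_ub (le_of_lt hδ0)
            _ = 2*n := by field_simp
            _ = ((2*n : ℕ) : ℝ) := by push_cast; ring
        have := Nat.ceil_le.mpr hdiv
        omega
      calc coverNumber (digitCantor n A + E) ((n:ℝ)^m)⁻¹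
          ≤ (⌈δ/((n:ℝ)^m)⁻¹⌉₊ + 1) * coverNumber (digitCantor n A + E) δ :=
            coverNumber_subdiv hinvpos hinvm (coverSet_nonempty hδ0 hCE_sub)
        _ ≤ (3*n) * coverNumber (digitCantor n A + E) δ :=
            Nat.mul_le_mul_right _ hfac
    have hchainN : coverNumber E δ * n^(k*m)
        ≤ (15*n)^(k+1) * (coverNumber (digitCantor n A + E) δ)^(k+1) := by
      calc coverNumber E δ * n^(k*m) ≤ coverNumber E ((n:ℝ)^m)⁻¹ * n^(k*m) :=
            Nat.mul_le_mul_right _ c1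
        _ ≤ 5^(k+1) * (coverNumber (digitCantor n A + E) ((n:ℝ)^m)⁻¹)^(k+1) := c2
        _ ≤ 5^(k+1) * ((3*n) * coverNumber (digitCantor n A + E) δ)^(k+1) := by
            apply Nat.mul_le_mul_left
            exact Nat.pow_le_pow_left c3 _
        _ = (15*n)^(k+1) * (coverNumber (digitCantor n A + E) δ)^(k+1) := by
            rw [mul_pow, ← mul_assoc, ← mul_pow]
            congr 2
            ring
    -- positivity
    have hposE : 1 ≤ coverNumber E δ := one_le_coverNumber hEne (coverSet_nonempty hδ0 hEsub)
    have hposCE : 1 ≤ coverNumber (digitCantor n A + E) δ :=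
      one_le_coverNumber hCEne (coverSet_nonempty hδ0 hCE_sub)
    have hposER : (1:ℝ) ≤ (coverNumber E δ : ℝ) := by exact_mod_cast hposE
    have hposCER : (1:ℝ) ≤ (coverNumber (digitCantor n A + E) δ : ℝ) := by exact_mod_cast hposCE
    -- real inequality
    have key : (coverNumber E δ : ℝ) * (1/δ)^k
        ≤ (15*(n:ℝ))^(k+1) * (coverNumber (digitCantor n A + E) δ : ℝ)^(k+1) := by
      have h1 : ((1:ℝ)/δ)^k ≤ ((n:ℝ)^m)^k := by
        apply pow_le_pow_left₀ (by positivity) hpowm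
      calc (coverNumber E δ : ℝ) * (1/δ)^k ≤ (coverNumber E δ : ℝ) * ((n:ℝ)^m)^k := by
            apply mul_le_mul_of_nonneg_left h1 (by positivity)
        _ = ((coverNumber E δ * n^(k*m) : ℕ) : ℝ) := by
            push_cast
            rw [← pow_mul, Nat.mul_comm m k]
        _ ≤ (((15*n)^(k+1) * (coverNumber (digitCantor n A + E) δ)^(k+1) : ℕ) : ℝ) := by
            exact_mod_cast hchainN
        _ = (15*(n:ℝ))^(k+1) * (coverNumber (digitCantor n A + E) δ : ℝ)^(k+1) := by
            push_cast
            ring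
    have hlogle := Real.log_le_log (by positivity) key
    rw [Real.log_mul (by positivity) (by positivity), Real.log_pow,
      Real.log_mul (by positivity) (by positivity), Real.log_pow, Real.log_pow] at hlogle
    push_cast at hlogle ⊢
    linarith
  -- eventual upper bounds on u and v
  have hevpos : ∀ᶠ δ in l, 0 < δ := by
    rw [hl_def]
    exact eventually_mem_nhdsWithin.mono (fun δ hδ => hδ)
  have hevlt : ∀ (r : ℝ), 0 < r → ∀ᶠ δ in l, δ < r := by
    intro r hr
    rw [hl_def]
    exact Filter.Eventually.filter_mono nhdsWithin_le_nhds (gt_mem_nhds hr)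
  have hevlog : ∀ (R : ℝ), ∀ᶠ δ in l, R ≤ Real.log (1/δ) := by
    intro R
    have h1 : (0:ℝ) < Real.exp (-R) := Real.exp_pos _
    filter_upwards [hevpos, hevlt _ h1] with δ hδ0 hδe
    rw [one_div, Real.le_log_iff_exp_le (by positivity)]
    rw [show Real.exp R = (Real.exp (-R))⁻¹ by rw [Real.exp_neg, inv_inv]]
    exact one_div δ ▸ (inv_anti₀ hδ0 (le_of_lt hδe))
  -- eventual upper bound for u, v
  have hNbound : ∀ (X : Set ℝ) (aa bb : ℝ), X ⊆ Set.Icc aa bb → aa ≤ bb → ∀ δ, 0 < δ → δ < 1 →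
      Real.log (coverNumber X δ) ≤ Real.log (bb - aa + 2) + Real.log (1/δ) := by
    intro X aa bb hX haabb δ hδ0 hδ1
    obtain ⟨C, hCcard, hCcover⟩ := exists_cover_of_subset_Icc hδ0 hX
    have h1 : coverNumber X δ ≤ ⌈(bb - aa)/δ⌉₊ + 1 :=
      le_trans (coverNumber_le_of_cover hCcover) hCcard
    have h1δ : (1:ℝ) ≤ 1/δ := by rw [le_div_iff₀ hδ0]; linarith
    have h2 : ((coverNumber X δ : ℕ) : ℝ) ≤ (bb - aa + 2) * (1/δ) := by
      calc ((coverNumber X δ : ℕ) : ℝ) ≤ ((⌈(bb - aa)/δ⌉₊ + 1 : ℕ) : ℝ) := by exact_mod_cast h1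
        _ = (⌈(bb - aa)/δ⌉₊ : ℝ) + 1 := by push_cast; ring
        _ ≤ ((bb - aa)/δ + 1) + 1 := by
            have := Nat.ceil_lt_add_one (show (0:ℝ) ≤ (bb-aa)/δ from div_nonneg (by linarith) hδ0.le)
            linarith
        _ ≤ (bb - aa + 2) * (1/δ) := by
            have hexp : (bb - aa + 2) * (1/δ) = (bb-aa)/δ + 2*(1/δ) := by ring
            rw [hexp]
            nlinarith
    rcases Nat.eq_zero_or_pos (coverNumber X δ) with h0 | hpos
    · rw [h0]
      simp only [Nat.cast_zero, Real.log_zero]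
      have : (0:ℝ) ≤ Real.log (bb - aa + 2) := Real.log_nonneg (by linarith)
      have : (0:ℝ) ≤ Real.log (1/δ) := Real.log_nonneg h1δ
      linarith [Real.log_nonneg (show (1:ℝ) ≤ bb - aa + 2 by linarith)]
    · calc Real.log (coverNumber X δ) ≤ Real.log ((bb - aa + 2) * (1/δ)) :=
            Real.log_le_log (by exact_mod_cast hpos) h2
        _ = Real.log (bb - aa + 2) + Real.log (1/δ) := by
            rw [Real.log_mul (by linarith) (by positivity)]
  have hubu : ∀ᶠ δ in l, u δ ≤ Real.log (b - a + 2) + 1 := by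
    filter_upwards [hevpos, hevlt 1 one_pos, hevlog 1] with δ hδ0 hδ1 hδlog
    have := hNbound E a b hEsub hab δ hδ0 hδ1
    rw [hu_def]
    dsimp only
    rw [div_le_iff₀ (by linarith)]
    have hL1 : (1:ℝ) ≤ Real.log (1/δ) := hδlog
    have hlognn : 0 ≤ Real.log (b - a + 2) := Real.log_nonneg (by linarith)
    nlinarith
  have hubv : ∀ᶠ δ in l, v δ ≤ Real.log (b + 2 - a + 2) + 1 := by
    filter_upwards [hevpos, hevlt 1 one_pos, hevlog 1] with δ hδ0 hδ1 hδlog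
    have := hNbound (digitCantor n A + E) a (b+2) hCE_sub (by linarith) δ hδ0 hδ1
    rw [hv_def]
    dsimp only
    rw [div_le_iff₀ (by linarith)]
    have hlognn : 0 ≤ Real.log (b + 2 - a + 2) := Real.log_nonneg (by linarith)
    nlinarith
  -- lower bound for u (needed for boundedness)
  have hlbu : ∀ᶠ δ in l, (0:ℝ) ≤ u δ := by
    filter_upwards [hevpos, hevlog 1] with δ hδ0 hδlog
    rw [hu_def]
    dsimp only
    apply div_nonneg ?_ (by linarith)
    have h1 : 1 ≤ coverNumber E δ := one_le_coverNumber hEne (coverSet_nonempty hδ0 hEsub)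
    exact Real.log_nonneg (by exact_mod_cast h1)
  -- main liminf argument
  have hfinal : ∀ c : ℝ, c < (k : ℝ)/(k+1) + lowerMinkDim E/(k+1) → c ≤ liminf v l := by
    intro c hc
    have hk1 : (0:ℝ) < (k:ℝ) + 1 := by positivity
    set T := (k : ℝ)/(k+1) + lowerMinkDim E/(k+1) with hT_def
    have e0 : ((k:ℝ)+1)*T = (k:ℝ) + lowerMinkDim E := by
      rw [hT_def]
      field_simp
    set ε := T - c with hε_def
    have hε : 0 < ε := by rw [hε_def]; linarith
    set c₁ := lowerMinkDim E - ((k:ℝ)+1)*ε/2 with hc₁_def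
    have hc₁lt : c₁ < liminf u l := by
      have hrfl : lowerMinkDim E = liminf u l := rfl
      rw [hc₁_def, ← hrfl]
      nlinarith
    have hbddu : l.IsBoundedUnder (· ≥ ·) u := ⟨0, by
      rw [Filter.eventually_map]; exact hlbu⟩
    have hevu := Filter.eventually_lt_of_lt_liminf hc₁lt hbddu
    set M := max (Real.log (15*n)) 1 with hM_def
    have hM1 : (1:ℝ) ≤ M := le_max_right _ _
    have hevlog2 := hevlog ((2/ε) * M)
    clear_value T ε c₁
    have hevv : ∀ᶠ δ in l, c ≤ v δ := by
      filter_upwards [hevpos, hevlt (1/2) (by norm_num), hevu, hevlog2]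
        with δ hδ0 hδh hu1 hL
      have hp := hpoint δ hδ0 hδh
      set L := Real.log (1/δ) with hL_def
      clear_value L
      have hLpos : 0 < L := by
        have h3 : (2/ε) * 1 ≤ (2/ε) * M := by
          apply mul_le_mul_of_nonneg_left hM1 (by positivity)
        have h4 : (0:ℝ) < 2/ε := by positivity
        nlinarith
      have hq3 : Real.log (15*n) ≤ (ε/2) * L := by
        have h5 : (ε/2) * ((2/ε) * M) ≤ (ε/2) * L :=
          mul_le_mul_of_nonneg_left hL (by positivity)
        have h6 : (ε/2) * ((2/ε) * M) = M := by
          field_simp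
        rw [h6] at h5
        calc Real.log (15*n) ≤ M := le_max_left _ _
          _ ≤ (ε/2) * L := h5
      rw [hu_def] at hu1
      dsimp only at hu1
      rw [← hL_def, lt_div_iff₀ hLpos] at hu1
      rw [hv_def]
      dsimp only
      rw [← hL_def, le_div_iff₀ hLpos]
      have e1 : ((k:ℝ)+1)*c = c₁ + (k:ℝ) - ((k:ℝ)+1)*ε/2 := by
        rw [hc₁_def]
        have hce : c = T - ε := by rw [hε_def]; ring
        rw [hce]
        linear_combination e0
      have hq3' : ((k:ℝ)+1)*Real.log (15*(n:ℝ)) ≤ ((k:ℝ)+1)*((ε/2)*L) :=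
        mul_le_mul_of_nonneg_left hq3 (by positivity)
      have e2 : ((k:ℝ)+1)*(c*L) = c₁*L + (k:ℝ)*L - ((k:ℝ)+1)*((ε/2)*L) := by
        linear_combination L * e1
      have h7 : ((k:ℝ)+1)*(c*L)
          ≤ ((k:ℝ)+1)*Real.log (coverNumber (digitCantor n A + E) δ) := by
        rw [e2]
        linarith [hu1, hp, hq3']
      have h8 := (mul_le_mul_iff_right₀ hk1).mp h7
      linarith
    exact Filter.le_liminf_of_le (Filter.isCoboundedUnder_ge_of_eventually_le l hubv) hevv
  by_contra hcon
  push_neg at hcon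
  have hvl : lowerMinkDim (digitCantor n A + E) = liminf v l := rfl
  rw [hvl] at hcon
  have hmid : (liminf v l + ((k : ℝ)/(k+1) + lowerMinkDim E/(k+1)))/2
      < (k : ℝ)/(k+1) + lowerMinkDim E/(k+1) := by linarith
  have := hfinal _ hmid
  linarith
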